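/- Let O be a monotone operation on subsets of a set D, and O' a monotone operation on subsets of a set D'. Suppose Z ⊆ D × D' is a relation such that for all A ⊆ D, A' ⊆ D' with the property that for all (a,b) ∈ Z, a ∈ A ⟺ b ∈ A', it holds that for all (a,b) ∈ Z, a ∈ O(A) ⟺ b ∈ O'(A'). Then for all ordinals λ and all (a,b) ∈ Z, a ∈ O^λ(∅) ⟺ b ∈ O'^λ(∅); in particular a belongs to the least fixed point of O if and only if b belongs to the least fixed point of O'. -/

import Mathlib

/-- Transfinite iteration of a set operator starting from the empty set:
`∅` at stage 0, apply `O` at successors, union at limits. -/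
noncomputable def iterO {D : Type} (O : Set D → Set D) (o : Ordinal) : Set D :=
  Ordinal.limitRecOn o ∅ (fun _ ih => O ih)
    (fun o _ ih => ⋃ p : {o' : Ordinal // o' < o}, ih p.1 p.2)

universe u

lemma iterO_zero {D : Type} (O : Set D → Set D) : iterO O (0 : Ordinal.{u}) = ∅ :=
  Ordinal.limitRecOn_zero _ _ _

lemma iterO_succ {D : Type} (O : Set D → Set D) (o : Ordinal.{u}) :
    iterO O (Order.succ o) = O (iterO O o) :=
  Ordinal.limitRecOn_succ _ _ _ _

lemma iterO_limit {D : Type} (O : Set D → Set D) (o : Ordinal.{u}) (h : Order.IsSuccLimit o) :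
    iterO O o = ⋃ p : {o' : Ordinal.{u} // o' < o}, iterO O p.1 :=
  Ordinal.limitRecOn_limit _ _ _ _ h

/-- Progressivity and monotonicity of the iteration, proved simultaneously. -/
lemma iterO_progress_mono {D : Type} (O : Set D → Set D) (hO : Monotone O) :
    ∀ o : Ordinal.{u}, (iterO O o ⊆ O (iterO O o)) ∧ ∀ a ≤ o, iterO O a ⊆ iterO O o := by
  intro o
  induction o using Ordinal.induction with
  | h o ih =>
    rcases Ordinal.zero_or_succ_or_isSuccLimit o with h0 | ⟨b, rfl⟩ | hl
    · subst h0
      refine ⟨by rw [iterO_zero]; exact Set.empty_subset _, ?_⟩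
      intro a ha
      rw [nonpos_iff_eq_zero] at ha
      subst ha; exact le_rfl
    · have hb : b < Order.succ b := Order.lt_succ b
      obtain ⟨hprog, hmono⟩ := ih b hb
      have hsucc : iterO O (Order.succ b) = O (iterO O b) := iterO_succ O b
      constructor
      · rw [hsucc]; exact hO hprog
      · intro a ha
        rcases eq_or_lt_of_le ha with rfl | ha
        · exact le_rfl
        · have ha' : a ≤ b := Order.lt_succ_iff.mp ha
          calc iterO O a ⊆ iterO O b := hmono a ha'
            _ ⊆ O (iterO O b) := hprog
            _ = iterO O (Order.succ b) := hsucc.symm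
    · have hmono : ∀ a ≤ o, iterO O a ⊆ iterO O o := by
        intro a ha
        rcases eq_or_lt_of_le ha with rfl | ha
        · exact le_rfl
        · rw [iterO_limit O o hl]
          exact Set.subset_iUnion (fun p : {o' : Ordinal.{u} // o' < o} => iterO O p.1) ⟨a, ha⟩
      refine ⟨?_, hmono⟩
      conv_lhs => rw [iterO_limit O o hl]
      apply Set.iUnion_subset
      rintro ⟨p, hp⟩
      calc iterO O p ⊆ O (iterO O p) := (ih p hp).1
        _ ⊆ O (iterO O o) := hO (hmono p hp.le)

lemma iterO_monotone {D : Type} (O : Set D → Set D) (hO : Monotone O) :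
    Monotone (iterO O : Ordinal.{u} → Set D) :=
  fun a b hab => (iterO_progress_mono O hO b).2 a hab

/-- Every stage is contained in every prefixed point. -/
lemma iterO_subset_prefixed {D : Type} (O : Set D → Set D) (hO : Monotone O)
    (A : Set D) (hA : O A ⊆ A) : ∀ o : Ordinal.{u}, iterO O o ⊆ A := by
  intro o
  induction o using Ordinal.induction with
  | h o ih =>
    rcases Ordinal.zero_or_succ_or_isSuccLimit o with h0 | ⟨b, rfl⟩ | hl
    · subst h0; rw [iterO_zero]; exact Set.empty_subset _
    · rw [iterO_succ]
      exact (hO (ih b (Order.lt_succ b))).trans hA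
    · rw [iterO_limit O o hl]
      apply Set.iUnion_subset
      rintro ⟨p, hp⟩
      exact ih p hp

/-- The iteration stabilizes: some stage is a prefixed point. -/
lemma iterO_exists_stab {D : Type} (O : Set D → Set D) (hO : Monotone O) :
    ∃ c : Ordinal.{u}, O (iterO O c) ⊆ iterO O c := by
  by_contra h
  push_neg at h
  have hstrict : StrictMono (iterO O : Ordinal.{u} → Set D) := by
    intro a b hab
    have h1 : iterO O a ⊆ O (iterO O a) := (iterO_progress_mono O hO a).1
    have h2 : iterO O a ≠ O (iterO O a) := by
      intro heq
      exact (h a) (heq ▸ le_rfl)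
    calc iterO O a < O (iterO O a) := lt_of_le_of_ne h1 h2
      _ = iterO O (Order.succ a) := (iterO_succ O a).symm
      _ ≤ iterO O b := iterO_monotone O hO (Order.succ_le_of_lt hab)
  have hinj : Function.Injective
      (fun o : Ordinal.{u} => (ULift.up (iterO O o) : ULift.{u} (Set D))) := by
    intro a b hab
    simp only [ULift.up_inj] at hab
    exact hstrict.injective hab
  exact Cardinal.not_injective_limitation_set _ (hinj.injOn)

/-- Past stabilization, all stages coincide. -/
lemma iterO_eq_of_stab {D : Type} (O : Set D → Set D) (hO : Monotone O)
    (c : Ordinal.{u}) (hc : O (iterO O c) ⊆ iterO O c) :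
    ∀ d : Ordinal.{u}, c ≤ d → iterO O d = iterO O c := by
  intro d
  induction d using Ordinal.induction with
  | h d ih =>
    intro hcd
    rcases eq_or_lt_of_le hcd with rfl | hcd
    · rfl
    rcases Ordinal.zero_or_succ_or_isSuccLimit d with h0 | ⟨b, rfl⟩ | hl
    · subst h0; exact absurd hcd (not_lt_zero (a := c))
    · have hcb : c ≤ b := Order.lt_succ_iff.mp hcd
      apply le_antisymm
      · rw [iterO_succ, ih b (Order.lt_succ b) hcb]
        exact hc
      · exact iterO_monotone O hO hcd.le
    · apply le_antisymm
      · rw [iterO_limit O d hl]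
        apply Set.iUnion_subset
        rintro ⟨p, hp⟩
        rcases le_total p c with hpc | hcp
        · exact iterO_monotone O hO hpc
        · rw [ih p hp hcp]
      · exact iterO_monotone O hO hcd.le

/-- A stabilized stage is the least fixed point, i.e. the intersection of prefixed points. -/
lemma iterO_stab_eq_lfp {D : Type} (O : Set D → Set D) (hO : Monotone O)
    (c : Ordinal.{u}) (hc : O (iterO O c) ⊆ iterO O c) :
    iterO O c = ⋂₀ {A : Set D | O A ⊆ A} := by
  apply le_antisymm
  · apply Set.subset_sInter
    intro A hA
    exact iterO_subset_prefixed O hO A hA c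
  · exact Set.sInter_subset_of_mem hc

/-- if `Z` relates two monotone operators `O`, `O'` in the sense that whenever
`A`, `A'` agree along `Z` then `O A`, `O' A'` agree along `Z`, then all stages of the
transfinite iterations agree along `Z`; in particular the least fixed points
(the intersections of the pre-fixed points) agree along `Z`. -/
theorem lfp_invariance_along_relation {D D' : Type}
    (O : Set D → Set D) (O' : Set D' → Set D')
    (hO : Monotone O) (hO' : Monotone O')
    (Z : D → D' → Prop)
    (hZ : ∀ (A : Set D) (A' : Set D'),
      (∀ a b, Z a b → (a ∈ A ↔ b ∈ A')) →
      ∀ a b, Z a b → (a ∈ O A ↔ b ∈ O' A')) :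
    (∀ (lam : Ordinal) (a : D) (b : D'), Z a b → (a ∈ iterO O lam ↔ b ∈ iterO O' lam)) ∧
    (∀ (a : D) (b : D'), Z a b →
      (a ∈ ⋂₀ {A : Set D | O A ⊆ A} ↔ b ∈ ⋂₀ {A' : Set D' | O' A' ⊆ A'})) := by
  have main : ∀ (lam : Ordinal) (a : D) (b : D'), Z a b →
      (a ∈ iterO O lam ↔ b ∈ iterO O' lam) := by
    intro lam
    induction lam using Ordinal.induction with
    | h o ih =>
      rcases Ordinal.zero_or_succ_or_isSuccLimit o with h0 | ⟨a, rfl⟩ | hl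
      · subst h0; rw [iterO_zero, iterO_zero]; intro a b _; simp
      · rw [iterO_succ, iterO_succ]
        exact hZ _ _ (ih a (Order.lt_succ a))
      · rw [iterO_limit O o hl, iterO_limit O' o hl]
        intro a b hab
        simp only [Set.mem_iUnion]
        constructor
        · rintro ⟨⟨p, hp⟩, hmem⟩
          exact ⟨⟨p, hp⟩, (ih p hp a b hab).mp hmem⟩
        · rintro ⟨⟨p, hp⟩, hmem⟩
          exact ⟨⟨p, hp⟩, (ih p hp a b hab).mpr hmem⟩
  refine ⟨main, ?_⟩
  intro a b hab
  obtain ⟨c, hc⟩ := iterO_exists_stab O hO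
  obtain ⟨c', hc'⟩ := iterO_exists_stab O' hO'
  have hcm : O (iterO O (max c c')) ⊆ iterO O (max c c') := by
    rw [iterO_eq_of_stab O hO c hc (max c c') (le_max_left c c')]
    exact hc
  have hcm' : O' (iterO O' (max c c')) ⊆ iterO O' (max c c') := by
    rw [iterO_eq_of_stab O' hO' c' hc' (max c c') (le_max_right c c')]
    exact hc'
  rw [← iterO_stab_eq_lfp O hO (max c c') hcm,
    ← iterO_stab_eq_lfp O' hO' (max c c') hcm']
  exact main (max c c') a b hab
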